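/- arXiv:2207.13911 — 5 statements merged into one kernel-verified Lean document; each statement's English description precedes it below -/
import Mathlib

section
/- Let g be a finite abelian group and let C be the set of subgroups H of g such that the quotient g/H is cyclic. Let A and A' be two families of positive real numbers indexed by C. If for every subgroup N of g one has ∏_{H ∈ C, N ≤ H} A'(H) = ∏_{H ∈ C, N ≤ H} A(H), then A'(H) = A(H) for every H ∈ C. -/
open scoped Classical

/-- If two families of positive reals indexed by the subgroups `H` of a finite abelian group `g`
with cyclic quotient `g ⧸ H` (i.e. by the irreducible rational characters of a corresponding
abelian field) have, for every subgroup `N` (i.e. every subfield), equal products over the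
indices `H ⊇ N`, then the two families coincide. -/
theorem chevalley_rational_components (g : Type*) [CommGroup g] [Fintype g]
    (A A' : Subgroup g → ℝ)
    (hA : ∀ H : Subgroup g, IsCyclic (g ⧸ H) → 0 < A H)
    (hA' : ∀ H : Subgroup g, IsCyclic (g ⧸ H) → 0 < A' H)
    (hprod : ∀ N : Subgroup g,
      ∏ H ∈ Finset.univ.filter (fun H : Subgroup g => IsCyclic (g ⧸ H) ∧ N ≤ H), A' H =
      ∏ H ∈ Finset.univ.filter (fun H : Subgroup g => IsCyclic (g ⧸ H) ∧ N ≤ H), A H) :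
    ∀ H : Subgroup g, IsCyclic (g ⧸ H) → A' H = A H := by
  suffices h : ∀ n : ℕ, ∀ H : Subgroup g,
      (Finset.univ.filter (fun K : Subgroup g => H < K)).card ≤ n →
      IsCyclic (g ⧸ H) → A' H = A H by
    intro H hH
    exact h _ H le_rfl hH
  intro n
  induction n using Nat.strong_induction_on with
  | _ n ih =>
    intro H hcard hcyc
    have key := hprod H
    set S := Finset.univ.filter (fun K : Subgroup g => IsCyclic (g ⧸ K) ∧ H ≤ K) with hS
    have hHS : H ∈ S := by simp [hS, hcyc]
    rw [← Finset.mul_prod_erase S A' hHS, ← Finset.mul_prod_erase S A hHS] at key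
    have hmem : ∀ K ∈ S.erase H, IsCyclic (g ⧸ K) ∧ H < K := by
      intro K hK
      obtain ⟨hne, hKS⟩ := Finset.mem_erase.mp hK
      simp only [hS, Finset.mem_filter, Finset.mem_univ, true_and] at hKS
      exact ⟨hKS.1, lt_of_le_of_ne hKS.2 (Ne.symm hne)⟩
    have heq : ∏ K ∈ S.erase H, A' K = ∏ K ∈ S.erase H, A K := by
      refine Finset.prod_congr rfl fun K hK => ?_
      obtain ⟨hKcyc, hlt⟩ := hmem K hK
      have hsub : (Finset.univ.filter (fun L : Subgroup g => K < L)) ⊂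
          Finset.univ.filter (fun L : Subgroup g => H < L) := by
        constructor
        · intro L hL
          simp only [Finset.mem_filter, Finset.mem_univ, true_and] at *
          exact hlt.trans hL
        · intro hcon
          have hc := hcon (by simp [hlt] : K ∈ Finset.univ.filter (fun L : Subgroup g => H < L))
          simp only [Finset.mem_filter, Finset.mem_univ, true_and] at hc
          exact lt_irrefl K hc
      have hc := Finset.card_lt_card hsub
      exact ih _ (lt_of_lt_of_le hc hcard) K le_rfl hKcyc
    rw [heq] at key
    have hpos : 0 < ∏ K ∈ S.erase H, A K :=
      Finset.prod_pos fun K hK => hA K (hmem K hK).1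
    exact mul_right_cancel₀ (ne_of_gt hpos) key
end

section
/- Let m > 1 be an integer and ℓ a prime number not dividing m. Let ζ be a primitive (ℓ·m)-th root of unity in the cyclotomic field ℚ(ζ_{ℓm}), so that ζ_m := ζ^ℓ is a primitive m-th root of unity generating the subfield ℚ(ζ_m) of ℚ(ζ_{ℓm}). Let μ be a positive integer with μ·ℓ ≡ 1 (mod m). Then the relative field norm satisfies N_{ℚ(ζ_{ℓm})/ℚ(ζ_m)}(1 − ζ) · (1 − ζ_m^μ) = 1 − ζ_m; equivalently, N_{ℚ(ζ_{ℓm})/ℚ(ζ_m)}(1 − ζ) = (1 − ζ_m)^{1 − τ_ℓ^{−1}}, where τ_ℓ ∈ Gal(ℚ(ζ_m)/ℚ) is the Frobenius automorphism determined by ζ_m ↦ ζ_m^ℓ. -/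
open IntermediateField Polynomial Finset

/-- Norms of cyclotomic numbers, inductive step `ℓ ∤ m` :  in `ℚ(ζ_{ℓm})/ℚ(ζ_m)`, with
`ζ` a primitive `ℓm`-th root of unity and `ζ_m = ζ^ℓ`, the norm of `1 - ζ` satisfies
`N(1 - ζ) · (1 - ζ_m^μ) = 1 - ζ_m`, where `μ·ℓ ≡ 1 (mod m)`, i.e.
`N(1 - ζ) = (1 - ζ_m)^{1 - τ_ℓ⁻¹}` for the Frobenius `τ_ℓ : ζ_m ↦ ζ_m^ℓ`. -/
theorem norm_one_sub_zeta_of_not_dvd (m ℓ : ℕ+) (hm : 1 < (m : ℕ))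
    (hℓ : (ℓ : ℕ).Prime) (hnd : ¬ (ℓ : ℕ) ∣ (m : ℕ))
    (K : Type*) [Field K] [Algebra ℚ K] [IsCyclotomicExtension {((ℓ * m : ℕ+) : ℕ)} ℚ K]
    (ζ : K) (hζ : IsPrimitiveRoot ζ (↑(ℓ * m) : ℕ))
    (μ : ℕ) (hμ : 0 < μ) (hμℓ : μ * (ℓ : ℕ) ≡ 1 [MOD (m : ℕ)]) :
    Algebra.norm ℚ⟮ζ ^ (ℓ : ℕ)⟯ (1 - ζ) *
        (1 - (⟨ζ ^ (ℓ : ℕ), IntermediateField.mem_adjoin_simple_self ℚ (ζ ^ (ℓ : ℕ))⟩ :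
          ℚ⟮ζ ^ (ℓ : ℕ)⟯) ^ μ) =
      1 - (⟨ζ ^ (ℓ : ℕ), IntermediateField.mem_adjoin_simple_self ℚ (ζ ^ (ℓ : ℕ))⟩ :
          ℚ⟮ζ ^ (ℓ : ℕ)⟯) := by
  classical
  have hℓpos : 0 < (ℓ : ℕ) := hℓ.pos
  have hmpos : 0 < (m : ℕ) := m.pos
  have hn : ((ℓ * m : ℕ+) : ℕ) = (ℓ : ℕ) * (m : ℕ) := by push_cast; ring
  have hnpos : 0 < ((ℓ * m : ℕ+) : ℕ) := (ℓ * m).pos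
  have hζm : IsPrimitiveRoot (ζ ^ (ℓ : ℕ)) (m : ℕ) := hζ.pow hnpos hn
  have hη : IsPrimitiveRoot (ζ ^ (m : ℕ)) (ℓ : ℕ) := hζ.pow hnpos (by rw [hn, mul_comm])
  set F := ℚ⟮ζ ^ (ℓ : ℕ)⟯ with hF
  haveI : FiniteDimensional ℚ K := IsCyclotomicExtension.finiteDimensional {((ℓ * m : ℕ+) : ℕ)} ℚ K
  haveI : IsGalois ℚ K := IsCyclotomicExtension.isGalois {((ℓ * m : ℕ+) : ℕ)} ℚ K
  haveI : IsGalois F K := IsGalois.tower_top_of_isGalois ℚ F K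
  haveI : FiniteDimensional F K := FiniteDimensional.right ℚ F K
  haveI : CharZero K := charZero_of_injective_algebraMap (algebraMap ℚ K).injective
  have hint : IsIntegral ℚ (ζ ^ (ℓ : ℕ)) := IsIntegral.of_finite ℚ _
  have hminp : minpoly ℚ (ζ ^ (ℓ : ℕ)) = cyclotomic (m : ℕ) ℚ := by
    have h := cyclotomic_eq_minpoly_rat hζm hmpos
    convert h.symm
    exact Subsingleton.elim _ _
  have hdeg : (minpoly ℚ (ζ ^ (ℓ : ℕ))).natDegree = (m : ℕ).totient := by
    rw [hminp, natDegree_cyclotomic]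
  have hrankF : Module.finrank ℚ F = (m : ℕ).totient := by
    rw [hF, IntermediateField.adjoin.finrank hint, hdeg]
  have hrankK : Module.finrank ℚ K = ((ℓ * m : ℕ+) : ℕ).totient :=
    IsCyclotomicExtension.finrank K (cyclotomic.irreducible_rat hnpos)
  have hcop : Nat.Coprime (ℓ : ℕ) (m : ℕ) := (Nat.Prime.coprime_iff_not_dvd hℓ).mpr hnd
  have hrankFK : Module.finrank F K = (ℓ : ℕ) - 1 := by
    have h1 : Module.finrank ℚ F * Module.finrank F K = Module.finrank ℚ K :=
      Module.finrank_mul_finrank ℚ F K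
    rw [hrankF, hrankK, hn, Nat.totient_mul hcop, Nat.totient_prime hℓ] at h1
    exact Nat.eq_of_mul_eq_mul_left (Nat.totient_pos.2 hmpos)
      (h1.trans (mul_comm _ _))
  have hcard : Fintype.card (K ≃ₐ[F] K) = (ℓ : ℕ) - 1 := by
    rw [← Nat.card_eq_fintype_card, IsGalois.card_aut_eq_finrank, hrankFK]
  haveI : NeZero (ℓ : ℕ) := ⟨hℓpos.ne'⟩
  have hζne : ζ ≠ 0 := hζ.ne_zero hnpos.ne'
  set η := ζ ^ (m : ℕ) with hηdef
  set β := ζ ^ ((ℓ : ℕ) * μ) with hβdef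
  -- product over all ℓ-th roots of ζ^ℓ
  have hprod : ∏ i ∈ Finset.range (ℓ : ℕ), (1 - η ^ i * ζ) = 1 - ζ ^ (ℓ : ℕ) := by
    have h := congrArg (Polynomial.eval 1)
      (X_pow_sub_C_eq_prod hη hℓpos (rfl : ζ ^ (ℓ : ℕ) = ζ ^ (ℓ : ℕ)))
    simpa [Polynomial.eval_prod] using h.symm
  -- β is one of them
  obtain ⟨t, ht⟩ : (m : ℕ) ∣ μ * (ℓ : ℕ) - 1 :=
    (Nat.modEq_iff_dvd' (Nat.one_le_iff_ne_zero.mpr (Nat.mul_pos hμ hℓpos).ne')).mp hμℓ.symm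
  have hμℓt : (ℓ : ℕ) * μ = (m : ℕ) * t + 1 := by
    rw [mul_comm]
    have h1 : 1 ≤ μ * (ℓ : ℕ) := Nat.one_le_iff_ne_zero.mpr (Nat.mul_pos hμ hℓpos).ne'
    omega
  have hβeq : η ^ (t % (ℓ : ℕ)) * ζ = β := by
    have hηt : η ^ t = η ^ (t % (ℓ : ℕ)) := by
      conv_lhs => rw [← Nat.div_add_mod t (ℓ : ℕ)]
      rw [pow_add, pow_mul, hη.pow_eq_one, one_pow, one_mul]
    rw [← hηt, hβdef, hμℓt, pow_succ, pow_mul]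
  set T₀ : Finset K := (Finset.range (ℓ : ℕ)).image (fun i => η ^ i * ζ) with hT₀
  have hinj0 : Set.InjOn (fun i => η ^ i * ζ) (Finset.range (ℓ : ℕ)) := hη.injOn_pow_mul hζne
  have hβT : β ∈ T₀ := Finset.mem_image.mpr
    ⟨t % (ℓ : ℕ), Finset.mem_range.mpr (Nat.mod_lt t hℓpos), hβeq⟩
  have hcardT : T₀.card = (ℓ : ℕ) := by
    rw [hT₀, Finset.card_image_of_injOn hinj0, Finset.card_range]
  have hfix : ∀ σ : K ≃ₐ[F] K, σ (ζ ^ (ℓ : ℕ)) = ζ ^ (ℓ : ℕ) := by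
    intro σ
    have h := σ.commutes ⟨ζ ^ (ℓ : ℕ), mem_adjoin_simple_self ℚ (ζ ^ (ℓ : ℕ))⟩
    simpa [IntermediateField.algebraMap_apply] using h
  have hmem : ∀ σ : K ≃ₐ[F] K, σ ζ ∈ T₀ := by
    intro σ
    have hpow : (σ ζ) ^ (ℓ : ℕ) = ζ ^ (ℓ : ℕ) := by rw [← map_pow, hfix]
    have h1 : (σ ζ * ζ⁻¹) ^ (ℓ : ℕ) = 1 := by
      rw [mul_pow, hpow, inv_pow, mul_inv_cancel₀ (pow_ne_zero _ hζne)]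
    obtain ⟨i, hi, hie⟩ := hη.eq_pow_of_pow_eq_one h1
    refine Finset.mem_image.mpr ⟨i, Finset.mem_range.mpr hi, ?_⟩
    rw [hie]
    field_simp
  have hneβ : ∀ σ : K ≃ₐ[F] K, σ ζ ≠ β := by
    intro σ h
    have hβm : β ^ (m : ℕ) = 1 := by
      rw [hβdef, ← pow_mul]
      have he : (ℓ : ℕ) * μ * (m : ℕ) = ((ℓ * m : ℕ+) : ℕ) * μ := by rw [hn]; ring
      rw [he, pow_mul, hζ.pow_eq_one, one_pow]
    have hζm1 : ζ ^ (m : ℕ) ≠ 1 := hζ.pow_ne_one_of_pos_of_lt hmpos.ne'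
      (by rw [hn]; exact lt_mul_of_one_lt_left hmpos hℓ.one_lt)
    exact hζm1 (σ.injective (by rw [map_pow, h, hβm, map_one]))
  have hQtop : Algebra.adjoin ℚ ({ζ} : Set K) = ⊤ :=
    IsCyclotomicExtension.adjoin_primitive_root_eq_top hζ
  have htop : Algebra.adjoin (↥F) ({ζ} : Set K) = ⊤ := by
    rw [eq_top_iff]
    intro x _
    have hx : x ∈ Algebra.adjoin ℚ ({ζ} : Set K) := hQtop ▸ Algebra.mem_top
    exact (Subalgebra.mem_restrictScalars ℚ).mp (Algebra.adjoin_le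
      (show ({ζ} : Set K) ⊆ (Subalgebra.restrictScalars ℚ (Algebra.adjoin (↥F) {ζ}) : Set K) from
        fun y hy => by
          rw [Set.mem_singleton_iff] at hy
          subst hy
          exact (Subalgebra.mem_restrictScalars ℚ).mpr (Algebra.subset_adjoin rfl)) hx)
  have hfinj : Function.Injective (fun σ : K ≃ₐ[F] K => σ ζ) := by
    intro σ τ h
    have h2 : (σ : K →ₐ[↥F] K) = (τ : K →ₐ[↥F] K) :=
      AlgHom.ext_of_adjoin_eq_top htop (fun y hy => by
        rw [Set.mem_singleton_iff] at hy; subst hy; exact h)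
    exact AlgEquiv.ext fun x => DFunLike.congr_fun h2 x
  have himg : (Finset.univ.image (fun σ : K ≃ₐ[F] K => σ ζ)) = T₀.erase β := by
    apply Finset.eq_of_subset_of_card_le
    · intro x hx
      obtain ⟨σ, _, rfl⟩ := Finset.mem_image.mp hx
      exact Finset.mem_erase.mpr ⟨hneβ σ, hmem σ⟩
    · rw [Finset.card_erase_of_mem hβT, hcardT,
        Finset.card_image_of_injective _ hfinj, Finset.card_univ, hcard]
  have key : (∏ σ : K ≃ₐ[F] K, σ (1 - ζ)) * (1 - β) = 1 - ζ ^ (ℓ : ℕ) := by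
    have h1 : ∏ σ : K ≃ₐ[F] K, (1 - σ ζ) = ∏ x ∈ T₀.erase β, (1 - x) := by
      rw [← himg, Finset.prod_image (fun a _ b _ h => hfinj h)]
    have h2 : ∏ x ∈ T₀, (1 - x) = 1 - ζ ^ (ℓ : ℕ) := by
      rw [hT₀, Finset.prod_image (fun a ha b hb h => hinj0 ha hb h)]
      exact hprod
    calc (∏ σ : K ≃ₐ[F] K, σ (1 - ζ)) * (1 - β)
        = (∏ x ∈ T₀.erase β, (1 - x)) * (1 - β) := by
          rw [← h1]
          congr 1
          exact Finset.prod_congr rfl fun σ _ => by rw [map_sub, map_one]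
      _ = ∏ x ∈ T₀, (1 - x) := Finset.prod_erase_mul _ _ hβT
      _ = 1 - ζ ^ (ℓ : ℕ) := h2
  apply Subtype.ext
  push_cast
  have hnorm : ((Algebra.norm F (1 - ζ) : F) : K) = ∏ σ : K ≃ₐ[F] K, σ (1 - ζ) :=
    Algebra.norm_eq_prod_automorphisms (K := ↥F) (1 - ζ)
  rw [hnorm, ← pow_mul]
  exact key
end

section
/- Let m > 1 be an integer and ℓ a prime number dividing m. Let ζ be a primitive (ℓ·m)-th root of unity in the cyclotomic field ℚ(ζ_{ℓm}), so that ζ_m := ζ^ℓ is a primitive m-th root of unity generating the subfield ℚ(ζ_m) of ℚ(ζ_{ℓm}). Then the relative field norm satisfies N_{ℚ(ζ_{ℓm})/ℚ(ζ_m)}(1 − ζ) = 1 − ζ_m. -/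
open IntermediateField

set_option maxHeartbeats 1000000
set_option synthInstance.maxHeartbeats 200000

/-- Norms of cyclotomic numbers, inductive step `ℓ ∣ m` :  in `ℚ(ζ_{ℓm})/ℚ(ζ_m)`, with
`ζ` a primitive `ℓm`-th root of unity and `ζ_m = ζ^ℓ`, the norm of `1 - ζ` equals `1 - ζ_m`. -/
theorem norm_one_sub_zeta_of_dvd (m ℓ : ℕ+) (hm : 1 < (m : ℕ))
    (hℓ : (ℓ : ℕ).Prime) (hd : (ℓ : ℕ) ∣ (m : ℕ))
    (K : Type*) [Field K] [Algebra ℚ K] [IsCyclotomicExtension {(↑(ℓ * m) : ℕ)} ℚ K]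
    (ζ : K) (hζ : IsPrimitiveRoot ζ (↑(ℓ * m) : ℕ)) :
    Algebra.norm ℚ⟮ζ ^ (ℓ : ℕ)⟯ (1 - ζ) =
      1 - (⟨ζ ^ (ℓ : ℕ), IntermediateField.mem_adjoin_simple_self ℚ (ζ ^ (ℓ : ℕ))⟩ :
          ℚ⟮ζ ^ (ℓ : ℕ)⟯) := by
  classical
  set F : IntermediateField ℚ K := ℚ⟮ζ ^ (ℓ : ℕ)⟯ with hF
  set c : F := ⟨ζ ^ (ℓ : ℕ), IntermediateField.mem_adjoin_simple_self ℚ (ζ ^ (ℓ : ℕ))⟩ with hc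
  have hcK : (algebraMap F K) c = ζ ^ (ℓ : ℕ) := rfl
  haveI : FiniteDimensional ℚ K := IsCyclotomicExtension.finiteDimensional {(↑(ℓ * m) : ℕ)} ℚ K
  haveI : FiniteDimensional F K := FiniteDimensional.right ℚ F K
  -- ζ^ℓ is a primitive m-th root of unity
  have hζm : IsPrimitiveRoot (ζ ^ (ℓ : ℕ)) (m : ℕ) :=
    hζ.pow (ℓ * m).pos (by push_cast; ring)
  -- finrank computations
  have hirr : Irreducible (Polynomial.cyclotomic (↑(ℓ * m) : ℕ) ℚ) :=
    Polynomial.cyclotomic.irreducible_rat (ℓ * m).pos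
  have hKQ : Module.finrank ℚ K = (↑(ℓ * m) : ℕ).totient :=
    IsCyclotomicExtension.finrank K hirr
  haveI : CharZero K := charZero_of_injective_algebraMap (algebraMap ℚ K).injective
  have hFQ : Module.finrank ℚ F = (m : ℕ).totient := by
    rw [hF, IntermediateField.adjoin.finrank (IsIntegral.of_finite ℚ _)]
    have h2 := congrArg Polynomial.natDegree (Polynomial.cyclotomic_eq_minpoly_rat hζm m.pos).symm
    rw [Polynomial.natDegree_cyclotomic] at h2
    convert h2 using 3
    exacts [rfl, Subsingleton.elim _ _]
  have hFK : Module.finrank F K = (ℓ : ℕ) := by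
    have ht : Module.finrank ℚ F * Module.finrank F K = Module.finrank ℚ K :=
      Module.finrank_mul_finrank ℚ F K
    rw [hKQ, hFQ] at ht
    have htot : (↑(ℓ * m) : ℕ).totient = (ℓ : ℕ) * (m : ℕ).totient := by
      push_cast
      exact Nat.totient_mul_of_prime_of_dvd hℓ hd
    rw [htot, mul_comm ((ℓ : ℕ)) _] at ht
    exact Nat.eq_of_mul_eq_mul_left (Nat.totient_pos.2 m.pos) ht
  -- F⟮ζ - 1⟯ = ⊤
  have hζmem : ζ ∈ F⟮ζ - 1⟯ := by
    have h1 : ζ - 1 ∈ F⟮ζ - 1⟯ := IntermediateField.mem_adjoin_simple_self F (ζ - 1)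
    have := add_mem h1 (one_mem F⟮ζ - 1⟯)
    simpa using this
  have htop : F⟮ζ - 1⟯ = ⊤ := by
    rw [eq_top_iff]
    intro x _
    have hadj : Algebra.adjoin ℚ ({ζ} : Set K) = ⊤ :=
      IsCyclotomicExtension.adjoin_primitive_root_eq_top hζ
    have hle : Algebra.adjoin ℚ ({ζ} : Set K) ≤
        Subalgebra.restrictScalars ℚ (F⟮ζ - 1⟯.toSubalgebra) := by
      apply Algebra.adjoin_le
      exact Set.singleton_subset_iff.2 hζmem
    have : x ∈ Subalgebra.restrictScalars ℚ (F⟮ζ - 1⟯.toSubalgebra) := by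
      rw [hadj] at hle; exact hle trivial
    exact this
  have hint : IsIntegral F (ζ - 1) := IsIntegral.of_finite F _
  -- the minimal polynomial of ζ - 1 over F
  set Q : Polynomial F := (Polynomial.X + Polynomial.C 1) ^ (ℓ : ℕ) - Polynomial.C c with hQ
  have hQmonic : Q.Monic := by
    apply Polynomial.Monic.sub_of_left ((Polynomial.monic_X_add_C (1 : F)).pow _)
    rw [Polynomial.degree_pow, Polynomial.degree_X_add_C]
    calc (Polynomial.C c).degree ≤ 0 := Polynomial.degree_C_le
    _ < (ℓ : ℕ) • 1 := by
        rw [nsmul_eq_mul, mul_one]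
        exact_mod_cast WithBot.coe_lt_coe.2 hℓ.pos
  have hdeg1 : ((Polynomial.X + Polynomial.C (1 : F)) ^ (ℓ : ℕ)).natDegree = (ℓ : ℕ) := by
    rw [Polynomial.natDegree_pow, Polynomial.natDegree_X_add_C, mul_one]
  have hQdeg : Q.natDegree = (ℓ : ℕ) := by
    rw [hQ, Polynomial.natDegree_sub_eq_left_of_natDegree_lt, hdeg1]
    rw [hdeg1, Polynomial.natDegree_C]
    exact hℓ.pos
  have hQroot : Polynomial.aeval (ζ - 1) Q = 0 := by
    simp [hQ, hcK, sub_add_cancel]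
  have hmindeg : (minpoly F (ζ - 1)).natDegree = (ℓ : ℕ) := by
    rw [← IntermediateField.adjoin.finrank hint, htop, IntermediateField.finrank_top', hFK]
  have hminQ : minpoly F (ζ - 1) = Q := by
    refine Polynomial.eq_of_monic_of_associated (minpoly.monic hint) hQmonic ?_
    refine Polynomial.associated_of_dvd_of_natDegree_le (minpoly.dvd F _ hQroot)
      hQmonic.ne_zero ?_
    rw [hmindeg, hQdeg]
  -- compute the norm of ζ - 1
  have he : Module.finrank F⟮ζ - 1⟯ K = 1 := by
    rw [htop]; exact IntermediateField.finrank_top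
  have hcoeff : Q.coeff 0 = 1 - c := by
    rw [Polynomial.coeff_zero_eq_eval_zero]
    simp [hQ]
  have hnorm1 : Algebra.norm F (ζ - 1) = (-1) ^ (ℓ : ℕ) * (1 - c) := by
    rw [Algebra.norm_eq_norm_adjoin F (ζ - 1), he, pow_one,
      ← IntermediateField.adjoin.powerBasis_gen hint,
      Algebra.PowerBasis.norm_gen_eq_coeff_zero_minpoly]
    rw [IntermediateField.adjoin.powerBasis_gen, IntermediateField.minpoly_gen, hminQ, hcoeff]
    congr 1
    rw [IntermediateField.adjoin.powerBasis_dim, hmindeg]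
  have hfin : Algebra.norm F (1 - ζ) = (-1) ^ (ℓ : ℕ) * Algebra.norm F (ζ - 1) := by
    have h1 : (1 : K) - ζ = algebraMap F K (-1) * (ζ - 1) := by
      push_cast; ring
    rw [h1, map_mul, Algebra.norm_algebraMap, hFK]
  rw [hfin, hnorm1, ← mul_assoc, ← pow_add, ← two_mul, pow_mul, neg_one_sq, one_pow, one_mul]
end

section
/- Let p be a prime, n ≥ 1, and let M be a finite abelian p-group equipped with an automorphism σ satisfying σ^{p^n} = id. If the fixed-point subgroup of σ equals the fixed-point subgroup of σ^p, i.e. {x ∈ M : σ(x) = x} = {x ∈ M : σ^p(x) = x}, then σ is the identity on M. -/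
/-- Let `M` be a finite abelian `p`-group with an automorphism `σ` with `σ ^ (p ^ n) = 1`.
If the fixed points of `σ` coincide with the fixed points of `σ ^ p`, then `σ` is the
identity on `M`. -/
theorem fixed_points_eq_pow_p_implies_id (p n : ℕ) (hp : p.Prime) (hn : 1 ≤ n)
    (M : Type*) [CommGroup M] [Finite M] (hM : IsPGroup p M)
    (σ : M ≃* M) (hσ : σ ^ (p ^ n) = 1)
    (hfix : {x : M | σ x = x} = {x : M | (σ ^ p) x = x}) :
    ∀ x : M, σ x = x := by
  haveI : Fact p.Prime := ⟨hp⟩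
  by_contra hcon
  push_neg at hcon
  obtain ⟨x0, hx0⟩ := hcon
  -- fixed-point subgroup
  set K : Subgroup M :=
    { carrier := {x : M | σ x = x}
      mul_mem' := fun {a b} ha hb => by simp only [Set.mem_setOf_eq] at *; rw [map_mul, ha, hb]
      one_mem' := by simp
      inv_mem' := fun {a} ha => by simp only [Set.mem_setOf_eq] at *; rw [map_inv, ha] } with hKdef
  have hmemK : ∀ z : M, z ∈ K ↔ σ z = z := fun z => Iff.rfl
  have hmap : K.map (σ : M →* M) = K := by
    ext z
    constructor
    · rintro ⟨y, hy, rfl⟩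
      have h : σ y = y := hy
      show σ (σ y) = σ y
      rw [h]
      exact h
    · intro hz
      exact ⟨z, hz, (hmemK z).mp hz⟩
  -- quotient
  let Q := M ⧸ K
  let τ : Q ≃* Q := QuotientGroup.congr K K σ hmap
  have hτ_mk : ∀ x : M, τ (↑x) = ↑(σ x) := fun x => QuotientGroup.congr_mk K K σ hmap x
  -- powers of τ on classes
  have hpowτ : ∀ (m : ℕ) (x : M), (τ ^ m) (↑x) = ↑((σ ^ m) x) := by
    intro m
    induction m with
    | zero => intro x; simp
    | succ m ih =>
        intro x
        rw [pow_succ, MulAut.mul_apply, hτ_mk, ih, pow_succ, MulAut.mul_apply]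
  have hτpn : τ ^ (p ^ n) = 1 := by
    ext q
    induction q using QuotientGroup.induction_on with
    | H x => rw [hpowτ, hσ]; simp
  -- the cyclic group generated by τ is a p-group
  have hG0 : IsPGroup p (Subgroup.zpowers τ) := by
    rintro ⟨g, hg⟩
    obtain ⟨m, hm⟩ := hg
    refine ⟨n, ?_⟩
    apply Subtype.ext
    push_cast
    rw [← hm]
    show (τ ^ m) ^ (p ^ n : ℕ) = 1
    rw [← zpow_natCast (τ ^ m), ← zpow_mul, mul_comm, zpow_mul, zpow_natCast, hτpn, one_zpow]
  -- Q is a nontrivial p-group, so p divides its cardinality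
  have hQp : IsPGroup p Q := hM.to_quotient K
  have hx0Q : (↑x0 : Q) ≠ 1 := by
    rw [Ne, QuotientGroup.eq_one_iff]
    exact hx0
  have hpdvd : p ∣ Nat.card Q := by
    obtain ⟨c, hc⟩ := hQp (↑x0 : Q)
    have hdvd : orderOf (↑x0 : Q) ∣ p ^ c := orderOf_dvd_of_pow_eq_one hc
    obtain ⟨a, -, ha⟩ := (Nat.dvd_prime_pow hp).mp hdvd
    have hane : a ≠ 0 := by
      rintro rfl
      exact hx0Q (orderOf_eq_one_iff.mp (by simpa using ha))
    have : p ∣ orderOf (↑x0 : Q) := ha ▸ dvd_pow_self p hane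
    exact this.trans (orderOf_dvd_natCard _)
  -- 1 is a fixed point of the action of ⟨τ⟩ on Q
  have h1fix : (1 : Q) ∈ MulAction.fixedPoints (Subgroup.zpowers τ) Q := by
    intro g
    show (g : MulAut Q) • (1 : Q) = 1
    simp
  obtain ⟨b, hb, hb1⟩ := hG0.exists_fixed_point_of_prime_dvd_card_of_fixed_point Q hpdvd h1fix
  obtain ⟨x, rfl⟩ := QuotientGroup.mk_surjective b
  have hbfix : τ (↑x) = ↑x := by
    have := hb ⟨τ, Subgroup.mem_zpowers τ⟩
    simpa using this
  -- extract the element k = σ x * x⁻¹ ∈ K, k ≠ 1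
  rw [hτ_mk] at hbfix
  have hkK : σ x * x⁻¹ ∈ K := by
    have h := QuotientGroup.eq.mp hbfix
    have : (σ x)⁻¹ * x ∈ K := h
    have := K.inv_mem this
    simpa [mul_comm] using this
  set k : M := σ x * x⁻¹ with hkdef
  have hk : σ k = k := hkK
  have hxfix : σ x ≠ x := by
    intro h
    exact hb1 ((QuotientGroup.eq_one_iff x).mpr ((hmemK x).mpr h)).symm
  have hkne : k ≠ 1 := by
    intro h
    apply hxfix
    have : σ x * x⁻¹ = 1 := h
    group at this ⊢
    rw [← mul_right_cancel_iff (a := x⁻¹)]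
    simpa using this
  have hσx : σ x = x * k := by rw [hkdef, mul_comm (σ x) x⁻¹, mul_inv_cancel_left]
  -- order of k is p^a with a ≥ 1
  obtain ⟨c, hc⟩ := hM k
  have hdvd : orderOf k ∣ p ^ c := orderOf_dvd_of_pow_eq_one hc
  obtain ⟨a, -, ha⟩ := (Nat.dvd_prime_pow hp).mp hdvd
  have hane : a ≠ 0 := by
    rintro rfl
    exact hkne (orderOf_eq_one_iff.mp (by simpa using ha))
  set y : M := x ^ (p ^ (a - 1)) with hydef
  have hσk : ∀ t : ℕ, σ (k ^ t) = k ^ t := fun t => by rw [map_pow, hk]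
  have hσjk : ∀ (j t : ℕ), (σ ^ j) (k ^ t) = k ^ t := by
    intro j
    induction j with
    | zero => simp
    | succ j ih => intro t; rw [pow_succ, MulAut.mul_apply, hσk, ih]
  have hσy : σ y = y * k ^ (p ^ (a - 1)) := by
    rw [hydef, map_pow, hσx, mul_pow]
  have hiter : ∀ j : ℕ, (σ ^ j) y = y * k ^ (j * p ^ (a - 1)) := by
    intro j
    induction j with
    | zero => simp
    | succ j ih =>
        rw [pow_succ, MulAut.mul_apply, hσy, map_mul, ih, hσjk, mul_assoc, ← pow_add,
          Nat.succ_mul]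
  have hyp : (σ ^ p) y = y := by
    rw [hiter p]
    have : p * p ^ (a - 1) = p ^ a := by
      conv_rhs => rw [← Nat.sub_add_cancel (Nat.one_le_iff_ne_zero.mpr hane)]
      rw [pow_succ, mul_comm]
    rw [this, ← ha, pow_orderOf_eq_one, mul_one]
  have hyfix : σ y = y := by
    have : y ∈ {x : M | (σ ^ p) x = x} := hyp
    rw [← hfix] at this
    exact this
  have hk1 : k ^ (p ^ (a - 1)) = 1 := by
    have h1 := hiter 1
    rw [pow_one, one_mul] at h1
    rw [hyfix] at h1
    exact left_eq_mul.mp h1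
  have : orderOf k ∣ p ^ (a - 1) := orderOf_dvd_of_pow_eq_one hk1
  rw [ha] at this
  have := (Nat.pow_dvd_pow_iff_le_right hp.one_lt).mp this
  omega
end

section
/- Let p be a prime, k ≥ 1, and let G be a cyclic group of order p^k acting on a finite abelian p-group M such that the image of the algebraic norm ν(x) = ∑_{g ∈ G} g·x equals the fixed subgroup M^G. Then Card(M) ≥ Card(M^G) · Card((M^G)[p^k]), where (M^G)[p^k] is the p^k-torsion subgroup of M^G. In particular, Card(M) ≥ Card(M^G) · p^{min(k, e)·r}, where p^e is the exponent and r the p-rank (minimal number of generators) of M^G. -/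
variable (G : Type*) [Group G] (M : Type*) [AddCommGroup M] [DistribMulAction G M]

/-- The subgroup of `G`-fixed points of `M`. -/
def fixedAddSubgroup : AddSubgroup M where
  carrier := {x : M | ∀ g : G, g • x = x}
  zero_mem' := fun g => smul_zero g
  add_mem' := by
    intro x y hx hy g
    rw [smul_add, hx g, hy g]
  neg_mem' := by
    intro x hx g
    rw [smul_neg, hx g]

/-- The `d`-torsion subgroup of the `G`-fixed points `Mᴳ`. -/
def fixedTorsion (d : ℕ) : AddSubgroup M where
  carrier := {x : M | (∀ g : G, g • x = x) ∧ d • x = 0}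
  zero_mem' := ⟨fun g => smul_zero g, smul_zero d⟩
  add_mem' := by
    rintro x y ⟨hx, hx'⟩ ⟨hy, hy'⟩
    exact ⟨fun g => by rw [smul_add, hx g, hy g], by rw [smul_add, hx', hy', add_zero]⟩
  neg_mem' := by
    rintro x ⟨hx, hx'⟩
    exact ⟨fun g => by rw [smul_neg, hx g], by rw [smul_neg, hx', neg_zero]⟩

section AuxiliaryHelpers

variable {H : Type*} [Group H] {N : Type*} [AddCommGroup N] [DistribMulAction H N]

/-- Chunking a sum over `range (n * m)`. -/
lemma aux_sum_range_mul_eq {β : Type*} [AddCommMonoid β] (f : ℕ → β) (n m : ℕ) :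
    ∑ i ∈ Finset.range (n * m), f i
      = ∑ a ∈ Finset.range m, ∑ b ∈ Finset.range n, f (n * a + b) := by
  induction m with
  | zero => simp
  | succ m ih =>
      rw [Nat.mul_succ, Finset.sum_range_add, ih, Finset.sum_range_succ]

/-- The partial norm `x ↦ ∑_{i<n} σ^i • x` as an additive homomorphism. -/
def partialNorm (σ : H) (n : ℕ) : N →+ N :=
  AddMonoidHom.mk' (fun x => ∑ i ∈ Finset.range n, σ ^ i • x) (by
    intro a b
    simp [smul_add, Finset.sum_add_distrib])

lemma partialNorm_apply (σ : H) (n : ℕ) (x : N) :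
    partialNorm σ n x = ∑ i ∈ Finset.range n, σ ^ i • x := rfl

lemma partialNorm_one (σ : H) (x : N) : partialNorm σ 1 x = x := by
  simp [partialNorm_apply]

lemma partialNorm_smul_pow (σ : H) (n t : ℕ) (x : N) :
    partialNorm σ n (σ ^ t • x) = σ ^ t • (partialNorm σ n x) := by
  simp only [partialNorm_apply, Finset.smul_sum]
  refine Finset.sum_congr rfl fun i _ => ?_
  rw [smul_smul, smul_smul, pow_mul_comm]

lemma partialNorm_mul (σ : H) (n m : ℕ) (x : N) :
    partialNorm σ (n * m) x = partialNorm (σ ^ n) m (partialNorm σ n x) := by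
  simp only [partialNorm_apply, aux_sum_range_mul_eq (fun i => σ ^ i • x) n m, Finset.smul_sum]
  refine Finset.sum_congr rfl fun a _ => Finset.sum_congr rfl fun b _ => ?_
  rw [smul_smul, ← pow_mul, ← pow_add]

lemma partialNorm_mul' (σ : H) (n m : ℕ) (x : N) :
    partialNorm σ (n * m) x = partialNorm σ n (partialNorm (σ ^ n) m x) := by
  rw [partialNorm_mul]
  conv_rhs => rw [partialNorm_apply (σ ^ n) m x, map_sum]
  conv_lhs => rw [partialNorm_apply (σ ^ n) m]
  simp only [← pow_mul, partialNorm_smul_pow]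

/-- First isomorphism theorem counting. -/
lemma card_eq_card_ker_mul_card_range' {α β : Type*} [AddGroup α] [AddGroup β] (f : α →+ β) :
    Nat.card α = Nat.card f.ker * Nat.card f.range := by
  rw [AddSubgroup.card_eq_card_quotient_mul_card_addSubgroup f.ker, mul_comm,
    Nat.card_congr (QuotientAddGroup.quotientKerEquivRange f).toEquiv]

/-- A finite `ZMod p`-module has cardinality `p ^ n` with a spanning family of size `n`. -/
lemma exists_fin_span (p : ℕ) [Fact p.Prime] (V : Type*) [AddCommGroup V] [Finite V]
    [Module (ZMod p) V] :
    ∃ (n : ℕ) (f : Fin n → V), Nat.card V = p ^ n ∧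
      ∀ v : V, v ∈ Submodule.span (ZMod p) (Set.range f) := by
  haveI : Fintype V := Fintype.ofFinite _
  let b := Module.Free.chooseBasis (ZMod p) V
  let e := Fintype.equivFin (Module.Free.ChooseBasisIndex (ZMod p) V)
  refine ⟨Fintype.card (Module.Free.ChooseBasisIndex (ZMod p) V),
    fun i => b (e.symm i), ?_, ?_⟩
  · rw [Nat.card_eq_fintype_card, Module.card_fintype b, ZMod.card]
  · intro v
    have hr : Set.range (fun i => b (e.symm i)) = Set.range b :=
      Function.Surjective.range_comp e.symm.surjective b
    rw [hr, b.span_eq]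
    trivial

/-- A finite abelian `p`-group has a generating set of size `s` with
`p ^ s ≤` the cardinality of its `p`-torsion subgroup. -/
lemma exists_generating_card_le_torsion (p : ℕ) (hp : p.Prime) (A : Type*) [AddCommGroup A]
    [Finite A] (htor : ∀ a : A, ∃ j : ℕ, p ^ j • a = 0) :
    ∃ s : Finset A, AddSubgroup.closure (s : Set A) = ⊤ ∧
      p ^ s.card ≤ Nat.card {a : A // p • a = 0} := by
  haveI := Fact.mk hp
  haveI : NeZero p := ⟨hp.ne_zero⟩
  classical
  let pmul : A →+ A := AddMonoidHom.mk' (fun a => p • a) fun a b => smul_add p a b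
  set P : AddSubgroup A := pmul.range with hP
  have hVtor : ∀ v : A ⧸ P, p • v = 0 := by
    intro v
    induction v using QuotientAddGroup.induction_on with
    | H a =>
      rw [← QuotientAddGroup.mk_nsmul, QuotientAddGroup.eq_zero_iff]
      exact ⟨a, rfl⟩
  letI : Module (ZMod p) (A ⧸ P) := AddCommGroup.zmodModule hVtor
  obtain ⟨d, f, hVcard, hspan⟩ := exists_fin_span p (A ⧸ P)
  have hmk : Function.Surjective (QuotientAddGroup.mk' P) := QuotientAddGroup.mk'_surjective P
  choose u hu using fun i => hmk (f i)
  refine ⟨Finset.image u Finset.univ, ?_, ?_⟩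
  · -- the lifts generate `A`
    set s : Finset A := Finset.image u Finset.univ with hs
    set B : AddSubgroup A := AddSubgroup.closure (s : Set A) with hB
    have hsub : B ⊔ P = ⊤ := by
      rw [eq_top_iff]
      intro a _
      have key : ∀ v : A ⧸ P, ∃ a' ∈ B, QuotientAddGroup.mk' P a' = v := by
        intro v
        have hv := hspan v
        induction hv using Submodule.span_induction with
        | mem x hx =>
          obtain ⟨i, rfl⟩ := hx
          exact ⟨u i, AddSubgroup.subset_closure (Finset.mem_coe.2
            (Finset.mem_image.2 ⟨i, Finset.mem_univ i, rfl⟩)), hu i⟩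
        | zero => exact ⟨0, zero_mem _, map_zero _⟩
        | add x y hx hy ihx ihy =>
          obtain ⟨ax, hax, rfl⟩ := ihx
          obtain ⟨ay, hay, rfl⟩ := ihy
          exact ⟨ax + ay, add_mem hax hay, map_add _ _ _⟩
        | smul c x hx ih =>
          obtain ⟨ax, hax, rfl⟩ := ih
          refine ⟨c.val • ax, nsmul_mem hax c.val, ?_⟩
          rw [map_nsmul, ← Nat.cast_smul_eq_nsmul (ZMod p), ZMod.natCast_val, ZMod.cast_id]
      obtain ⟨a', ha', heq⟩ := key (QuotientAddGroup.mk' P a)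
      have hsubmem : a - a' ∈ P := by
        rw [← neg_mem_iff]
        simpa [QuotientAddGroup.eq_iff_sub_mem] using heq
      have ha : a = a' + (a - a') := by abel
      rw [ha]
      exact add_mem (AddSubgroup.mem_sup_left ha') (AddSubgroup.mem_sup_right hsubmem)
    -- Nakayama
    let μ : A ⧸ B →+ A ⧸ B := AddMonoidHom.mk' (fun q => p • q) fun a b => smul_add p a b
    have hμs : Function.Surjective μ := by
      intro q
      induction q using QuotientAddGroup.induction_on with
      | H a =>
        have ha : a ∈ B ⊔ P := hsub ▸ AddSubgroup.mem_top a
        rw [AddSubgroup.mem_sup] at ha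
        obtain ⟨y, hy, z, hz, hyz⟩ := ha
        obtain ⟨w, rfl⟩ := hz
        refine ⟨QuotientAddGroup.mk w, ?_⟩
        show (p • (QuotientAddGroup.mk w : A ⧸ B)) = QuotientAddGroup.mk a
        rw [← QuotientAddGroup.mk_nsmul, QuotientAddGroup.eq_iff_sub_mem]
        have : (p • w : A) - a = -y := by
          rw [← hyz]; show (pmul w : A) - (y + pmul w) = -y; abel
        rw [this]
        exact neg_mem hy
    have hμi : Function.Injective μ := (Finite.injective_iff_surjective).2 hμs
    have key2 : ∀ (j : ℕ) (q : A ⧸ B), p ^ j • q = 0 → q = 0 := by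
      intro j
      induction j with
      | zero => intro q h; simpa using h
      | succ j ih =>
        intro q h
        have h2 : μ (p ^ j • q) = μ 0 := by
          show p • p ^ j • q = p • (0 : A ⧸ B)
          rw [smul_zero, ← mul_nsmul, ← pow_succ]
          exact h
        exact ih _ (hμi h2)
    rw [eq_top_iff]
    intro a _
    obtain ⟨j, hj⟩ := htor a
    have h0 : (QuotientAddGroup.mk a : A ⧸ B) = 0 := by
      refine key2 j _ ?_
      rw [← QuotientAddGroup.mk_nsmul, hj]
      rfl
    exact (QuotientAddGroup.eq_zero_iff a).mp h0
  · -- cardinality bound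
    have hker : Nat.card pmul.ker = Nat.card {a : A // p • a = 0} := by
      refine Nat.card_congr (Equiv.subtypeEquivRight fun a => ?_)
      exact Iff.rfl
    have h1 := card_eq_card_ker_mul_card_range' pmul
    have h2 := AddSubgroup.card_eq_card_quotient_mul_card_addSubgroup P
    have hPpos : 0 < Nat.card P := Nat.card_pos
    have hkerV : Nat.card pmul.ker = Nat.card (A ⧸ P) := by
      have := h1.symm.trans h2
      exact Nat.eq_of_mul_eq_mul_right hPpos this
    have hcard_le : (Finset.image u Finset.univ).card ≤ d := by
      refine le_trans (Finset.card_image_le) ?_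
      simp
    calc p ^ (Finset.image u Finset.univ).card ≤ p ^ d :=
          Nat.pow_le_pow_right hp.pos hcard_le
      _ = Nat.card (A ⧸ P) := hVcard.symm
      _ = Nat.card pmul.ker := hkerV.symm
      _ = Nat.card {a : A // p • a = 0} := hker

end AuxiliaryHelpers

/-- If `G` is cyclic of order `p ^ k` acting on a finite abelian `p`-group `M` with the image
of the algebraic norm `ν(x) = ∑ g, g • x` equal to the fixed subgroup `Mᴳ`, then
`#M ≥ #Mᴳ · #(Mᴳ[p^k])`; in particular `#M ≥ #Mᴳ · p ^ (min k e · r)` where `p ^ e` is the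
exponent and `r` the `p`-rank (minimal number of generators) of `Mᴳ`. -/
theorem norm_image_fixed_growth (p : ℕ) (hp : p.Prime) (k : ℕ) (hk : 1 ≤ k)
    [IsCyclic G] [Fintype G] (hG : Fintype.card G = p ^ k)
    [Finite M] (hpM : ∀ x : M, ∃ j : ℕ, p ^ j • x = 0)
    (hν : Set.range (fun x : M => ∑ g : G, g • x) = (fixedAddSubgroup G M : Set M))
    (e : ℕ) (he : AddMonoid.exponent (fixedAddSubgroup G M) = p ^ e)
    (r : ℕ) (hr : IsLeast {n : ℕ | ∃ s : Finset (fixedAddSubgroup G M),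
      s.card = n ∧ AddSubgroup.closure (s : Set (fixedAddSubgroup G M)) = ⊤} r) :
    Nat.card M ≥ Nat.card (fixedAddSubgroup G M) * Nat.card (fixedTorsion G M (p ^ k)) ∧
      Nat.card M ≥ Nat.card (fixedAddSubgroup G M) * p ^ (min k e * r) := by
  classical
  obtain ⟨σ, hσ⟩ := IsCyclic.exists_generator (α := G)
  -- the full norm is the partial norm of length `p ^ k`
  have hFk : ∀ x : M, partialNorm σ (p ^ k) x = ∑ g : G, g • x := by
    intro x
    have horder : orderOf σ = p ^ k := by
      rw [orderOf_eq_card_of_forall_mem_zpowers hσ, Nat.card_eq_fintype_card, hG]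
    have hbij : Function.Bijective (fun i : Fin (p ^ k) => σ ^ (i : ℕ)) := by
      rw [Fintype.bijective_iff_injective_and_card]
      refine ⟨fun i j hij => ?_, by simp [hG]⟩
      have hmod := pow_eq_pow_iff_modEq.mp hij
      rw [horder] at hmod
      have : (i : ℕ) = (j : ℕ) := by
        have h1 := hmod
        unfold Nat.ModEq at h1
        rwa [Nat.mod_eq_of_lt i.isLt, Nat.mod_eq_of_lt j.isLt] at h1
      exact Fin.ext this
    rw [partialNorm_apply, ← Fin.sum_univ_eq_sum_range (fun i => σ ^ i • x) (p ^ k)]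
    exact Fintype.sum_bijective _ hbij _ _ (fun i => rfl)
  have hAk : (partialNorm σ (p ^ k) : M →+ M).range = fixedAddSubgroup G M := by
    apply SetLike.ext'
    rw [AddMonoidHom.coe_range, ← hν]
    exact congrArg Set.range (funext hFk)
  -- the descending chain of images of partial norms
  have hmono : ∀ j, (partialNorm σ (p ^ (j + 1)) : M →+ M).range
      ≤ (partialNorm σ (p ^ j) : M →+ M).range := by
    intro j y hy
    obtain ⟨x, rfl⟩ := hy
    refine AddMonoidHom.mem_range.2 ⟨partialNorm (σ ^ (p ^ j)) p x, ?_⟩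
    rw [← partialNorm_mul', ← pow_succ]
  have hchain : ∀ i j : ℕ, i ≤ j → (partialNorm σ (p ^ j) : M →+ M).range
      ≤ (partialNorm σ (p ^ i) : M →+ M).range := by
    intro i j hij
    induction hij with
    | refl => exact le_rfl
    | step h ih => exact le_trans (hmono _) (by exact ih)
  -- counting one step of the chain
  have hstep : ∀ j, j ≤ k →
      Nat.card (fixedTorsion G M p) * Nat.card ((partialNorm σ (p ^ (j + 1)) : M →+ M).range)
        ≤ Nat.card ((partialNorm σ (p ^ j) : M →+ M).range) := by
    intro j hj
    set Aj := (partialNorm σ (p ^ j) : M →+ M).range with hAj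
    let φ : Aj →+ M := (partialNorm (σ ^ (p ^ j)) p).comp Aj.subtype
    have hrange : φ.range = (partialNorm σ (p ^ (j + 1)) : M →+ M).range := by
      apply le_antisymm
      · rintro y ⟨⟨z, hz⟩, rfl⟩
        obtain ⟨x, rfl⟩ := hz
        refine AddMonoidHom.mem_range.2 ⟨x, ?_⟩
        show partialNorm σ (p ^ (j + 1)) x
          = partialNorm (σ ^ (p ^ j)) p (partialNorm σ (p ^ j) x)
        rw [← partialNorm_mul, ← pow_succ]
      · rintro y ⟨x, rfl⟩
        refine ⟨⟨partialNorm σ (p ^ j) x, AddMonoidHom.mem_range.2 ⟨x, rfl⟩⟩, ?_⟩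
        show partialNorm (σ ^ (p ^ j)) p (partialNorm σ (p ^ j) x)
          = partialNorm σ (p ^ (j + 1)) x
        rw [← partialNorm_mul, ← pow_succ]
    have hcount : Nat.card Aj
        = Nat.card φ.ker * Nat.card ((partialNorm σ (p ^ (j + 1)) : M →+ M).range) := by
      rw [card_eq_card_ker_mul_card_range' φ, hrange]
    have hmem : ∀ x : M, x ∈ fixedTorsion G M p → x ∈ Aj := by
      intro x hx
      have hxk : x ∈ (partialNorm σ (p ^ k) : M →+ M).range := by
        rw [hAk]
        exact hx.1
      exact hchain j k hj hxk
    have hphi0 : ∀ (x : M) (hx : x ∈ fixedTorsion G M p), φ ⟨x, hmem x hx⟩ = 0 := by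
      intro x hx
      show partialNorm (σ ^ (p ^ j)) p x = 0
      rw [partialNorm_apply, Finset.sum_congr rfl (fun i _ => hx.1 ((σ ^ p ^ j) ^ i)),
        Finset.sum_const, Finset.card_range]
      exact hx.2
    have hinj : Nat.card (fixedTorsion G M p) ≤ Nat.card φ.ker := by
      refine Nat.card_le_card_of_injective
        (fun t => (⟨⟨t.1, hmem t.1 t.2⟩, hphi0 t.1 t.2⟩ : φ.ker)) ?_
      intro a b hab
      have h1 := congrArg Subtype.val hab
      have h2 := congrArg Subtype.val h1
      exact Subtype.ext h2
    calc Nat.card (fixedTorsion G M p)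
          * Nat.card ((partialNorm σ (p ^ (j + 1)) : M →+ M).range)
        ≤ Nat.card φ.ker * Nat.card ((partialNorm σ (p ^ (j + 1)) : M →+ M).range) :=
          Nat.mul_le_mul_right _ hinj
      _ = Nat.card Aj := hcount.symm
  -- iterating the chain
  have hiter : ∀ j, j ≤ k →
      Nat.card (fixedTorsion G M p) ^ j * Nat.card ((partialNorm σ (p ^ j) : M →+ M).range)
        ≤ Nat.card M := by
    intro j
    induction j with
    | zero =>
      intro _
      have h0 : (partialNorm σ (p ^ 0) : M →+ M).range = ⊤ := by
        rw [eq_top_iff]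
        intro x _
        exact AddMonoidHom.mem_range.2 ⟨x, by rw [pow_zero, partialNorm_one]⟩
      rw [pow_zero, one_mul, h0, AddSubgroup.card_top]
    | succ j ih =>
      intro hjk
      have h1 := hstep j (le_of_lt hjk)
      have h2' := ih (Nat.le_of_succ_le hjk)
      calc Nat.card (fixedTorsion G M p) ^ (j + 1)
            * Nat.card ((partialNorm σ (p ^ (j + 1)) : M →+ M).range)
          = Nat.card (fixedTorsion G M p) ^ j * (Nat.card (fixedTorsion G M p)
            * Nat.card ((partialNorm σ (p ^ (j + 1)) : M →+ M).range)) := by ring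
        _ ≤ Nat.card (fixedTorsion G M p) ^ j
            * Nat.card ((partialNorm σ (p ^ j) : M →+ M).range) :=
          Nat.mul_le_mul_left _ h1
        _ ≤ Nat.card M := h2'
  have hmain : Nat.card (fixedTorsion G M p) ^ k * Nat.card (fixedAddSubgroup G M)
      ≤ Nat.card M := by
    have := hiter k le_rfl
    rwa [hAk] at this
  constructor
  · -- first statement
    have h1 : Nat.card M
        = Nat.card (partialNorm σ (p ^ k) : M →+ M).ker * Nat.card (fixedAddSubgroup G M) := by
      rw [card_eq_card_ker_mul_card_range' (partialNorm σ (p ^ k) : M →+ M), hAk]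
    have hmem0 : ∀ (x : M), x ∈ fixedTorsion G M (p ^ k) →
        partialNorm σ (p ^ k) x = 0 := by
      intro x hx
      rw [partialNorm_apply, Finset.sum_congr rfl (fun i _ => hx.1 (σ ^ i)),
        Finset.sum_const, Finset.card_range]
      exact hx.2
    have h2 : Nat.card (fixedTorsion G M (p ^ k))
        ≤ Nat.card (partialNorm σ (p ^ k) : M →+ M).ker := by
      refine Nat.card_le_card_of_injective
        (fun t => (⟨t.1, hmem0 t.1 t.2⟩ : (partialNorm σ (p ^ k) : M →+ M).ker)) ?_
      intro a b hab
      have h2 := congrArg Subtype.val hab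
      exact Subtype.ext h2
    rw [ge_iff_le, h1, mul_comm]
    exact Nat.mul_le_mul_right _ h2
  · -- second statement
    have hT : p ^ r ≤ Nat.card (fixedTorsion G M p) := by
      obtain ⟨s, hs, hcard⟩ := exists_generating_card_le_torsion p hp (fixedAddSubgroup G M)
        (fun a => by
          obtain ⟨j, hj⟩ := hpM a.1
          exact ⟨j, Subtype.ext (by simpa using hj)⟩)
      have hr2 : r ≤ s.card := hr.2 ⟨s, rfl, hs⟩
      have hequiv : Nat.card {a : fixedAddSubgroup G M // p • a = 0}
          = Nat.card (fixedTorsion G M p) := by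
        refine Nat.card_congr ⟨fun t => ⟨t.1.1, t.1.2, ?_⟩, fun x => ⟨⟨x.1, x.2.1⟩, ?_⟩,
          fun t => by ext; rfl, fun x => by ext; rfl⟩
        · exact congrArg Subtype.val t.2
        · apply Subtype.ext
          show p • (x.1 : M) = 0
          exact x.2.2
      calc p ^ r ≤ p ^ s.card := Nat.pow_le_pow_right hp.pos hr2
        _ ≤ Nat.card {a : fixedAddSubgroup G M // p • a = 0} := hcard
        _ = Nat.card (fixedTorsion G M p) := hequiv
    rw [ge_iff_le]
    calc Nat.card (fixedAddSubgroup G M) * p ^ (min k e * r)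
        ≤ Nat.card (fixedAddSubgroup G M) * (p ^ r) ^ k := by
          refine Nat.mul_le_mul_left _ ?_
          rw [← pow_mul]
          exact Nat.pow_le_pow_right hp.pos
            (by
              rw [mul_comm r k]
              exact Nat.mul_le_mul_right r (min_le_left k e))
      _ ≤ Nat.card (fixedAddSubgroup G M) * Nat.card (fixedTorsion G M p) ^ k := by
          exact Nat.mul_le_mul_left _ (Nat.pow_le_pow_left hT k)
      _ ≤ Nat.card M := by
          rw [mul_comm]
          exact hmain
end
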